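/- Fix a nonzero real number c. For every natural number n, the discrete arcsine law μ_c is supported on c·ℤ and its weights satisfy μ_c({c·n}) = μ_c({−c·n}) = (1/(2^n · c^{2n})) · ( Σ_{l=0}^∞ (−1)^l / ((√2·c)^{2l} · (n+l)! · l!) )². -/

import Mathlib

open MeasureTheory

/-- `a_n(c)`, the `n`-th Fourier coefficient of `t ↦ exp(i·√2·sin t / c)`. -/
noncomputable def arcsineFourierCoeff (c : ℝ) (n : ℤ) : ℂ :=
  (1 / (2 * Real.pi)) * ∫ t in (0 : ℝ)..(2 * Real.pi),
    Complex.exp (Complex.I * ((Real.sqrt 2 * Real.sin t / c : ℝ) : ℂ)) *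
      Complex.exp (-(Complex.I * (n : ℂ) * (t : ℂ)))

/-- The discrete arcsine law `μ_c = Σ_{n∈ℤ} |a_n(c)|²·δ_{cn}`. -/
noncomputable def discreteArcsine (c : ℝ) : Measure ℝ :=
  Measure.sum fun n : ℤ =>
    ENNReal.ofReal (‖arcsineFourierCoeff c n‖ ^ 2) • Measure.dirac (c * n)

open Complex Real

lemma orth (m : ℤ) : (∫ t in (0:ℝ)..(2*Real.pi), Complex.exp ((m : ℂ) * t * Complex.I))
    = if m = 0 then (2*Real.pi : ℂ) else 0 := by
  rcases eq_or_ne m 0 with h | h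
  · simp [h, intervalIntegral.integral_const]
  · rw [if_neg h]
    have h2 : ((m:ℂ) * Complex.I) ≠ 0 := by
      simp [Complex.I_ne_zero, Int.cast_injective.ne_iff, h, Int.cast_eq_zero]
    have := integral_exp_mul_complex (a := 0) (b := 2*Real.pi) h2
    simp_rw [show ∀ t:ℝ, (m:ℂ) * Complex.I * t = (m:ℂ)*t*Complex.I by intro t; ring] at this
    rw [this]
    rw [show ((m:ℂ) * (2*Real.pi:ℝ) * Complex.I) = (m : ℂ) * (2 * Real.pi * Complex.I) by push_cast; ring]
    simp [Complex.exp_int_mul_two_pi_mul_I]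

lemma sinpow (k : ℕ) (m : ℤ) :
    (∫ t in (0:ℝ)..(2*Real.pi), (Complex.sin t)^k * Complex.exp (-(Complex.I * m * t)))
    = (2*Real.pi) * (1/(2*Complex.I))^k *
      ∑ j ∈ Finset.range (k+1), (if 2*(j:ℤ) = k + m then ((-1:ℂ))^(k-j) * (k.choose j) else 0) := by
  have hsin : ∀ t : ℝ, (Complex.sin t)^k * Complex.exp (-(Complex.I*(m:ℂ)*t)) =
      ∑ j ∈ Finset.range (k+1), (1/(2*Complex.I))^k * ((-1:ℂ))^(k-j) * (k.choose j) *
        Complex.exp ((2*(j:ℤ) - k - m : ℤ) * t * Complex.I) := by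
    intro t
    have e1 : Complex.sin t = (1/(2*Complex.I)) * (Complex.exp (Complex.I*t) + -Complex.exp (-(Complex.I*t))) := by
      rw [Complex.sin]
      have : (Complex.I : ℂ) ≠ 0 := Complex.I_ne_zero
      field_simp
      ring_nf
      simp [Complex.I_sq]
    rw [e1, mul_pow, add_pow, Finset.mul_sum, Finset.sum_mul]
    refine Finset.sum_congr rfl fun j hj => ?_
    have hj' : j ≤ k := Nat.lt_succ_iff.mp (Finset.mem_range.mp hj)
    rw [neg_pow, ← Complex.exp_nat_mul, ← Complex.exp_nat_mul]
    have hexp : Complex.exp ((j:ℂ) * (Complex.I * t)) * Complex.exp (((k-j:ℕ):ℂ) * -(Complex.I * t))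
        * Complex.exp (-(Complex.I*(m:ℂ)*t)) = Complex.exp ((2*(j:ℤ) - k - m : ℤ) * t * Complex.I) := by
      rw [← Complex.exp_add, ← Complex.exp_add]
      congr 1
      push_cast [Nat.cast_sub hj']
      ring
    linear_combination ((1/(2*Complex.I))^k * (-1:ℂ)^(k-j) * (k.choose j:ℂ)) * hexp
  calc (∫ t in (0:ℝ)..(2*Real.pi), (Complex.sin t)^k * Complex.exp (-(Complex.I * m * t)))
      = ∫ t in (0:ℝ)..(2*Real.pi), ∑ j ∈ Finset.range (k+1), (1/(2*Complex.I))^k * ((-1:ℂ))^(k-j) * (k.choose j) *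
        Complex.exp ((2*(j:ℤ) - k - m : ℤ) * t * Complex.I) := by
        apply intervalIntegral.integral_congr; intro t _; exact hsin t
    _ = ∑ j ∈ Finset.range (k+1), ∫ t in (0:ℝ)..(2*Real.pi), (1/(2*Complex.I))^k * ((-1:ℂ))^(k-j) * (k.choose j) *
        Complex.exp ((2*(j:ℤ) - k - m : ℤ) * t * Complex.I) := by
        apply intervalIntegral.integral_finset_sum
        intro j _
        apply Continuous.intervalIntegrable
        fun_prop
    _ = (2*Real.pi) * (1/(2*Complex.I))^k *
      ∑ j ∈ Finset.range (k+1), (if 2*(j:ℤ) = k + m then ((-1:ℂ))^(k-j) * (k.choose j) else 0) := by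
        rw [Finset.mul_sum]
        refine Finset.sum_congr rfl fun j hj => ?_
        rw [intervalIntegral.integral_const_mul, orth]
        have : (2*(j:ℤ) - k - m = 0) ↔ (2*(j:ℤ) = k + m) := by omega
        simp only [this]
        split_ifs with h
        · ring
        · ring

noncomputable def Tcoef (x : ℝ) (m : ℤ) (k : ℕ) : ℝ :=
  (x/2)^k / k.factorial *
    ∑ j ∈ Finset.range (k+1), (if 2*(j:ℤ) = k + m then ((-1:ℝ))^(k-j) * (k.choose j) else 0)

lemma Tcoef_abs_le (x : ℝ) (m : ℤ) (k : ℕ) : |Tcoef x m k| ≤ |x|^k / k.factorial := by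
  have h1 : |∑ j ∈ Finset.range (k+1), (if 2*(j:ℤ) = k + m then ((-1:ℝ))^(k-j) * (k.choose j) else 0)|
      ≤ (2:ℝ)^k := by
    refine (Finset.abs_sum_le_sum_abs _ _).trans ?_
    have hb : ∀ j ∈ Finset.range (k+1),
        |if 2*(j:ℤ) = k + m then ((-1:ℝ))^(k-j) * (k.choose j) else 0| ≤ (k.choose j : ℝ) := by
      intro j _
      split_ifs
      · rw [abs_mul, _root_.abs_pow, abs_neg, abs_one, one_pow, one_mul, Nat.abs_cast]
      · simp
    refine (Finset.sum_le_sum hb).trans ?_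
    rw [← Nat.cast_sum, Nat.sum_range_choose]
    push_cast
    exact le_refl _
  rw [Tcoef, abs_mul]
  calc |(x/2)^k / k.factorial| * |∑ j ∈ Finset.range (k+1), (if 2*(j:ℤ) = k + m then ((-1:ℝ))^(k-j) * (k.choose j) else 0)|
      ≤ ((|x|/2)^k / k.factorial) * 2^k := by
        apply mul_le_mul _ h1 (abs_nonneg _) (by positivity)
        rw [abs_div, _root_.abs_pow, abs_div, Nat.abs_cast]
        simp
    _ = |x|^k / k.factorial := by
        rw [div_pow]
        have : (k.factorial : ℝ) ≠ 0 := Nat.cast_ne_zero.mpr k.factorial_ne_zero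
        field_simp

lemma Fnorm_le (x : ℝ) (m : ℤ) (k : ℕ) (t : ℝ) :
    ‖(Complex.I * ((x * Real.sin t : ℝ):ℂ))^k / (k.factorial : ℂ) * Complex.exp (-(Complex.I*(m:ℂ)*(t:ℂ)))‖
      ≤ |x|^k / k.factorial := by
  have he : ‖Complex.exp (-(Complex.I*(m:ℂ)*(t:ℂ)))‖ = 1 := by
    rw [show -(Complex.I*(m:ℂ)*(t:ℂ)) = ((-(m*t) : ℝ) : ℂ) * Complex.I by push_cast; ring]
    rw [Complex.norm_exp_ofReal_mul_I]
  rw [norm_mul, he, mul_one, norm_div, norm_pow, norm_mul,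
    Complex.norm_I, one_mul, Complex.norm_real, Real.norm_eq_abs, Complex.norm_natCast]
  have h1 : |x * Real.sin t| ≤ |x| := by
    calc |x * Real.sin t| = |x| * |Real.sin t| := abs_mul _ _
      _ ≤ |x| * 1 := by gcongr; exacts [Real.abs_sin_le_one t]
      _ = |x| := mul_one _
  have h2 : |x * Real.sin t|^k ≤ |x|^k := pow_le_pow_left₀ (abs_nonneg _) h1 k
  have h3 : (0:ℝ) < k.factorial := Nat.cast_pos.mpr k.factorial_pos
  gcongr

lemma cexp_tsum (z : ℂ) : Complex.exp z = ∑' k : ℕ, z^k / k.factorial := by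
  rw [Complex.exp_eq_exp_ℂ, NormedSpace.exp_eq_tsum_div]

lemma Tcoef_cast (x : ℝ) (m : ℤ) (k : ℕ) : ((Tcoef x m k : ℝ) : ℂ) =
    ((x:ℂ)/2)^k / (k.factorial:ℂ) *
      ∑ j ∈ Finset.range (k+1), (if 2*(j:ℤ) = k + m then ((-1:ℂ))^(k-j) * (k.choose j) else 0) := by
  rw [Tcoef]
  push_cast [apply_ite (fun r : ℝ => (r : ℂ))]
  ring

lemma integral_eq (x : ℝ) (m : ℤ) :
    (∫ t in (0:ℝ)..(2*Real.pi), Complex.exp (Complex.I * ((x * Real.sin t : ℝ):ℂ)) *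
      Complex.exp (-(Complex.I*(m:ℂ)*(t:ℂ))))
    = (2*Real.pi : ℂ) * ((∑' k : ℕ, Tcoef x m k : ℝ) : ℂ) := by
  set F : ℕ → ℝ → ℂ := fun k t =>
    (Complex.I * ((x * Real.sin t : ℝ):ℂ))^k / (k.factorial:ℂ) *
      Complex.exp (-(Complex.I*(m:ℂ)*(t:ℂ))) with hF
  have h2pi : (0:ℝ) ≤ 2*Real.pi := by positivity
  have hpt : ∀ t : ℝ, Complex.exp (Complex.I * ((x * Real.sin t : ℝ):ℂ)) *
      Complex.exp (-(Complex.I*(m:ℂ)*(t:ℂ))) = ∑' k, F k t := by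
    intro t
    rw [cexp_tsum (Complex.I * ((x * Real.sin t : ℝ):ℂ)), ← tsum_mul_right]
  rw [intervalIntegral.integral_congr (g := fun t => ∑' k, F k t) (fun t _ => hpt t)]
  rw [intervalIntegral.integral_of_le h2pi]
  rw [MeasureTheory.integral_tsum ?hmeas ?hfin]
  case hmeas =>
    intro k
    apply Continuous.aestronglyMeasurable
    fun_prop
  case hfin =>
    have hb : ∀ k : ℕ, (∫⁻ t in Set.Ioc (0:ℝ) (2*Real.pi), ‖F k t‖₊)
        ≤ ENNReal.ofReal (|x|^k / k.factorial * (2*Real.pi)) := by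
      intro k
      calc (∫⁻ t in Set.Ioc (0:ℝ) (2*Real.pi), ‖F k t‖₊)
          ≤ ∫⁻ _t in Set.Ioc (0:ℝ) (2*Real.pi), ENNReal.ofReal (|x|^k / k.factorial) := by
            apply lintegral_mono
            intro t
            dsimp only
            rw [← enorm_eq_nnnorm, ← ofReal_norm_eq_enorm]
            exact ENNReal.ofReal_le_ofReal (Fnorm_le x m k t)
        _ = ENNReal.ofReal (|x|^k / k.factorial) * volume (Set.Ioc (0:ℝ) (2*Real.pi)) := by
            rw [MeasureTheory.lintegral_const, Measure.restrict_apply MeasurableSet.univ, Set.univ_inter]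
        _ = ENNReal.ofReal (|x|^k / k.factorial * (2*Real.pi)) := by
            rw [Real.volume_Ioc, sub_zero, ← ENNReal.ofReal_mul (by positivity)]
    refine ne_top_of_le_ne_top ?_ (ENNReal.tsum_le_tsum hb)
    rw [← ENNReal.ofReal_tsum_of_nonneg (fun k => by positivity)
      (((Real.summable_pow_div_factorial |x|)).mul_right _)]
    exact ENNReal.ofReal_ne_top
  have hint : ∀ k : ℕ, (∫ t in Set.Ioc (0:ℝ) (2*Real.pi), F k t)
      = ((Tcoef x m k : ℝ) : ℂ) * (2*Real.pi) := by
    intro k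
    rw [← intervalIntegral.integral_of_le h2pi]
    have hFt : ∀ t : ℝ, F k t = (Complex.I * (x:ℂ))^k / (k.factorial:ℂ) *
        ((Complex.sin t)^k * Complex.exp (-(Complex.I*(m:ℂ)*(t:ℂ)))) := by
      intro t
      simp only [hF]
      rw [Complex.ofReal_mul, Complex.ofReal_sin]
      ring
    rw [intervalIntegral.integral_congr (fun t _ => hFt t),
      intervalIntegral.integral_const_mul, sinpow, Tcoef_cast]
    set S : ℂ := ∑ j ∈ Finset.range (k+1),
      (if 2*(j:ℤ) = k + m then ((-1:ℂ))^(k-j) * (k.choose j) else 0) with hS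
    have hI : (Complex.I * (x:ℂ))^k * (1/(2*Complex.I))^k = ((x:ℂ)/2)^k := by
      rw [← mul_pow]
      congr 1
      field_simp
    have hk : (k.factorial : ℂ) ≠ 0 := Nat.cast_ne_zero.mpr k.factorial_ne_zero
    linear_combination ((2*Real.pi:ℂ) * S / (k.factorial:ℂ)) * hI
  simp_rw [hint]
  rw [tsum_mul_right, ← Complex.ofReal_tsum]
  ring

lemma choose_fact (n l : ℕ) :
    ((n+2*l).choose (n+l) : ℝ) * (n+l).factorial * l.factorial = (n+2*l).factorial := by
  have h := Nat.choose_mul_factorial_mul_factorial (show n+l ≤ n+2*l by omega)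
  have h2 : n + 2*l - (n+l) = l := by omega
  rw [h2] at h
  exact_mod_cast congrArg (fun r : ℕ => (r : ℝ)) h

lemma tsumA (x : ℝ) (n : ℕ) : ∑' k : ℕ, Tcoef x (n:ℤ) k
    = ∑' l : ℕ, (x/2)^(n+2*l) * ((-1:ℝ))^l / ((n+l).factorial * l.factorial) := by
  rw [← Function.Injective.tsum_eq (g := fun l : ℕ => n + 2*l) (fun a b hab => by dsimp at hab; omega)
    (f := fun k => Tcoef x (n:ℤ) k) ?hsupp]
  case hsupp =>
    intro k hk
    simp only [Function.mem_support, ne_eq] at hk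
    by_contra hkr
    apply hk
    rw [Tcoef, Finset.sum_eq_zero, mul_zero]
    intro j hj
    rw [if_neg]
    intro hcond
    have hj' : j ≤ k := by simpa using Nat.lt_succ_iff.mp (Finset.mem_range.mp hj)
    apply hkr
    exact ⟨j - n, by dsimp; omega⟩
  apply tsum_congr
  intro l
  rw [Tcoef]
  have hcond : ∀ j : ℕ, (2*(j:ℤ) = ((n+2*l : ℕ) : ℤ) + (n:ℤ)) ↔ j = n + l := by
    intro j; omega
  simp only [hcond]
  rw [Finset.sum_ite_eq' (Finset.range (n+2*l+1)) (n+l)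
    (fun j => ((-1:ℝ))^(n+2*l-j) * ((n+2*l).choose j))]
  rw [if_pos (Finset.mem_range.mpr (by omega))]
  have h2 : n + 2*l - (n+l) = l := by omega
  rw [h2]
  have hfac := choose_fact n l
  have hC : ((n+2*l).choose (n+l) : ℝ) = ((n+2*l).factorial : ℝ) / ((n+l).factorial * l.factorial) := by
    rw [eq_div_iff (by positivity)]
    linear_combination hfac
  rw [hC]
  field_simp

lemma tsumB (x : ℝ) (n : ℕ) : ∑' k : ℕ, Tcoef x (-(n:ℤ)) k
    = (-1:ℝ)^n * ∑' l : ℕ, (x/2)^(n+2*l) * ((-1:ℝ))^l / ((n+l).factorial * l.factorial) := by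
  rw [← tsum_mul_left]
  rw [← Function.Injective.tsum_eq (g := fun l : ℕ => n + 2*l) (fun a b hab => by dsimp at hab; omega)
    (f := fun k => Tcoef x (-(n:ℤ)) k) ?hsupp]
  case hsupp =>
    intro k hk
    simp only [Function.mem_support, ne_eq] at hk
    by_contra hkr
    apply hk
    rw [Tcoef, Finset.sum_eq_zero, mul_zero]
    intro j hj
    rw [if_neg]
    intro hcond
    have hj' : j ≤ k := by simpa using Nat.lt_succ_iff.mp (Finset.mem_range.mp hj)
    apply hkr
    exact ⟨j, by dsimp; omega⟩
  apply tsum_congr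
  intro l
  rw [Tcoef]
  have hcond : ∀ j : ℕ, (2*(j:ℤ) = ((n+2*l : ℕ) : ℤ) + (-(n:ℤ))) ↔ j = l := by
    intro j; omega
  simp only [hcond]
  rw [Finset.sum_ite_eq' (Finset.range (n+2*l+1)) l
    (fun j => ((-1:ℝ))^(n+2*l-j) * ((n+2*l).choose j))]
  rw [if_pos (Finset.mem_range.mpr (by omega))]
  have h2 : n + 2*l - l = n + l := by omega
  rw [h2]
  have hchoose : ((n+2*l).choose l : ℝ) = ((n+2*l).choose (n+l) : ℝ) := by
    norm_cast
    exact (Nat.choose_symm_of_eq_add (by omega)).symm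
  rw [hchoose]
  have hfac := choose_fact n l
  have hC : ((n+2*l).choose (n+l) : ℝ) = ((n+2*l).factorial : ℝ) / ((n+l).factorial * l.factorial) := by
    rw [eq_div_iff (by positivity)]
    linear_combination hfac
  rw [hC, pow_add]
  field_simp
  ring

lemma coeff_eq (c : ℝ) (m : ℤ) :
    arcsineFourierCoeff c m = ((∑' k : ℕ, Tcoef (Real.sqrt 2 / c) m k : ℝ) : ℂ) := by
  rw [arcsineFourierCoeff]
  simp_rw [show ∀ t:ℝ, Real.sqrt 2 * Real.sin t / c = Real.sqrt 2 / c * Real.sin t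
    from fun t => by ring]
  rw [integral_eq]
  have hπ : (Real.pi : ℂ) ≠ 0 := Complex.ofReal_ne_zero.mpr Real.pi_ne_zero
  field_simp

lemma weight_eq (c : ℝ) (hc : c ≠ 0) (m : ℤ) :
    discreteArcsine c {c * (m:ℝ)} = ENNReal.ofReal (‖arcsineFourierCoeff c m‖ ^ 2) := by
  rw [discreteArcsine, Measure.sum_apply _ (measurableSet_singleton _)]
  rw [tsum_eq_single m ?_]
  · rw [Measure.smul_apply, Measure.dirac_apply' _ (measurableSet_singleton _)]
    simp
  · intro b hb
    rw [Measure.smul_apply, Measure.dirac_apply' _ (measurableSet_singleton _)]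
    rw [Set.indicator_of_notMem, smul_zero]
    simp only [Set.mem_singleton_iff]
    intro h
    exact hb (Int.cast_injective (mul_left_cancel₀ hc h))

lemma compl_eq (c : ℝ) :
    discreteArcsine c (Set.range fun k : ℤ => c * k)ᶜ = 0 := by
  have hmeas : MeasurableSet (Set.range fun k : ℤ => c * (k:ℝ))ᶜ :=
    (Set.countable_range _).measurableSet.compl
  rw [discreteArcsine, Measure.sum_apply _ hmeas]
  have hz : ∀ m : ℤ, (ENNReal.ofReal (‖arcsineFourierCoeff c m‖ ^ 2) •
      Measure.dirac (c * (m:ℝ))) (Set.range fun k : ℤ => c * (k:ℝ))ᶜ = 0 := by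
    intro m
    rw [Measure.smul_apply, Measure.dirac_apply' _ hmeas]
    rw [Set.indicator_of_notMem, smul_zero]
    simp only [Set.mem_compl_iff, not_not]
    exact ⟨m, rfl⟩
  simp_rw [hz]
  exact tsum_zero

/-- The discrete arcsine law `μ_c` is supported on `c·ℤ`, and its weights are
`μ_c({cn}) = μ_c({−cn}) = (1/(2ⁿc^{2n}))·(Σ_{l=0}^∞ (−1)^l/((√2·c)^{2l}·(n+l)!·l!))²`. -/
theorem discreteArcsine_weights (c : ℝ) (hc : c ≠ 0) (n : ℕ) :
    discreteArcsine c (Set.range fun k : ℤ => c * k)ᶜ = 0 ∧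
    discreteArcsine c {c * (n : ℝ)} = discreteArcsine c {-(c * (n : ℝ))} ∧
    discreteArcsine c {c * (n : ℝ)} =
      ENNReal.ofReal
        (1 / (2 ^ n * c ^ (2 * n)) *
          (∑' l : ℕ, (-1 : ℝ) ^ l /
            ((Real.sqrt 2 * c) ^ (2 * l) * (Nat.factorial (n + l)) * (Nat.factorial l))) ^ 2) := by
  have hsc : Real.sqrt 2 ≠ 0 := by positivity
  have hscc : Real.sqrt 2 * c ≠ 0 := mul_ne_zero hsc hc
  -- basic singleton identifications
  have hn1 : (c * (n : ℝ)) = c * ((n : ℤ) : ℝ) := by push_cast; ring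
  have hn2 : (-(c * (n : ℝ))) = c * ((-(n:ℤ) : ℤ) : ℝ) := by push_cast; ring
  -- the two weights
  have hw1 : discreteArcsine c {c * (n : ℝ)}
      = ENNReal.ofReal (‖arcsineFourierCoeff c (n:ℤ)‖ ^ 2) := by
    rw [hn1]; exact weight_eq c hc (n:ℤ)
  have hw2 : discreteArcsine c {-(c * (n : ℝ))}
      = ENNReal.ofReal (‖arcsineFourierCoeff c (-(n:ℤ))‖ ^ 2) := by
    rw [hn2]; exact weight_eq c hc (-(n:ℤ))
  -- norms via series
  set S : ℝ := ∑' l : ℕ, (Real.sqrt 2 / c/2)^(n+2*l) * ((-1:ℝ))^l /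
    ((n+l).factorial * l.factorial) with hS
  have hnorm1 : ‖arcsineFourierCoeff c (n:ℤ)‖ ^ 2 = S ^ 2 := by
    rw [coeff_eq, tsumA, Complex.norm_real, Real.norm_eq_abs, _root_.sq_abs]
  have hnorm2 : ‖arcsineFourierCoeff c (-(n:ℤ))‖ ^ 2 = S ^ 2 := by
    rw [coeff_eq, tsumB, Complex.norm_real, Real.norm_eq_abs, abs_mul, _root_.abs_pow,
      abs_neg, abs_one, one_pow, one_mul, _root_.sq_abs]
  refine ⟨compl_eq c, ?_, ?_⟩
  · rw [hw1, hw2, hnorm1, hnorm2]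
  · rw [hw1, hnorm1]
    congr 1
    -- algebra: S² = 1/(2ⁿc^{2n}) · (Σ …)²
    have hx2 : Real.sqrt 2 / c / 2 = 1/(Real.sqrt 2 * c) := by
      have h2 : Real.sqrt 2 * Real.sqrt 2 = 2 := Real.mul_self_sqrt (by norm_num)
      field_simp
      linear_combination h2
    have hterm : ∀ l : ℕ, (Real.sqrt 2 / c/2)^(n+2*l) * ((-1:ℝ))^l /
        ((n+l).factorial * l.factorial)
        = (1/(Real.sqrt 2 * c))^n * ((-1:ℝ)^l /
          ((Real.sqrt 2 * c) ^ (2 * l) * (Nat.factorial (n + l)) * (Nat.factorial l))) := by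
      intro l
      rw [hx2, pow_add]
      have h1 : ((n+l).factorial : ℝ) ≠ 0 := Nat.cast_ne_zero.mpr (Nat.factorial_ne_zero _)
      have h2' : ((l).factorial : ℝ) ≠ 0 := Nat.cast_ne_zero.mpr (Nat.factorial_ne_zero _)
      field_simp
      ring
      rw [← mul_pow, ← mul_pow, ← mul_pow,
        show Real.sqrt 2 * c * (Real.sqrt 2)⁻¹ * c⁻¹ = 1 by field_simp, one_pow]
    rw [hS]
    simp_rw [hterm]
    rw [tsum_mul_left, mul_pow]
    congr 1
    have hu2 : (1/(Real.sqrt 2 * c))^2 = 1/(2*c^2) := by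
      rw [div_pow, one_pow, mul_pow, Real.sq_sqrt (by norm_num : (0:ℝ) ≤ 2)]
    rw [show ((1/(Real.sqrt 2 * c))^n)^2 = ((1/(Real.sqrt 2 * c))^2)^n by ring]
    rw [hu2, div_pow, one_pow, mul_pow, ← pow_mul]
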